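/- Whenever F is an infinite antichain under ⊆ consisting of finite subsets of ℕ, there exists an infinite subfamily {A_i : i < ω} ⊆ F and natural numbers {k_i : i < ω} such that k_i ∈ A_i and k_i ∉ A_j for every j ≠ i. -/

import Mathlib

private def auxList (step : List ℕ → ℕ) : ℕ → List ℕ
  | 0 => []
  | n+1 => auxList step n ++ [step (auxList step n)]

private lemma exists_seq (Q : List ℕ → ℕ → Prop) (h : ∀ l, ∃ i, Q l i) :
    ∃ idx : ℕ → ℕ, ∀ n, Q ((List.range n).map idx) (idx n) := by
  choose step hstep using h
  refine ⟨fun n => step (auxList step n), fun n => ?_⟩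
  have key : ∀ n, (List.range n).map (fun n => step (auxList step n)) = auxList step n := by
    intro n
    induction n with
    | zero => simp [auxList]
    | succ n ih => rw [List.range_succ, List.map_append, ih]; simp [auxList]
  rw [key]; exact hstep _

theorem stmt1 (F : Set (Finset ℕ)) (hinf : F.Infinite)
    (hanti : IsAntichain (· ⊆ ·) F) :
    ∃ A : ℕ → Finset ℕ, (∀ i, A i ∈ F) ∧ Function.Injective A ∧
      ∃ k : ℕ → ℕ, ∀ i, k i ∈ A i ∧ ∀ j, j ≠ i → k i ∉ A j := by
  classical
  obtain ⟨g, hginj, hgF⟩ : ∃ g : ℕ → Finset ℕ, Function.Injective g ∧ ∀ i, g i ∈ F :=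
    ⟨fun i => (Set.Infinite.natEmbedding F hinf i : Finset ℕ),
      fun a b h => (Set.Infinite.natEmbedding F hinf).injective (Subtype.ext h),
      fun i => (Set.Infinite.natEmbedding F hinf i).2⟩
  set U : Ultrafilter ℕ := Ultrafilter.of Filter.atTop with hUdef
  set P : ℕ → Prop := fun x => {i | x ∈ g i} ∈ U with hPdef
  have hU_ici : ∀ N : ℕ, {i | N ≤ i} ∈ U := fun N =>
    Ultrafilter.of_le _ (Filter.mem_atTop N)
  have agree : ∀ (X : Finset ℕ) (N : ℕ), ∃ i, N ≤ i ∧ ∀ x ∈ X, (x ∈ g i ↔ P x) := by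
    intro X N
    have hT : {i | ∀ x ∈ X, (x ∈ g i ↔ P x)} ∈ U := by
      have hx : ∀ x ∈ X, {i | x ∈ g i ↔ P x} ∈ U := by
        intro x hxX
        by_cases hp : P x
        · have hmem : {i | x ∈ g i} ∈ U := hp
          filter_upwards [hmem] with i hi
          simp [hi, hp]
        · have hmem : {i | x ∈ g i}ᶜ ∈ U := (Ultrafilter.compl_mem_iff_notMem).2 hp
          filter_upwards [hmem] with i hi
          simp only [Set.mem_compl_iff, Set.mem_setOf_eq] at hi
          simp [hi, hp]
      have heq : {i | ∀ x ∈ X, (x ∈ g i ↔ P x)} = ⋂ x ∈ X, {i | x ∈ g i ↔ P x} := by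
        ext i; simp
      rw [heq]
      exact (Filter.biInter_finset_mem X).2 hx
    obtain ⟨i, hiN, hiT⟩ := Filter.nonempty_of_mem (Filter.inter_mem (hU_ici N) hT)
    exact ⟨i, hiN, hiT⟩
  have notsub : ∀ i0 : ℕ, ∃ x ∈ g i0, ¬ P x := by
    intro i0
    by_contra h
    push_neg at h
    obtain ⟨j, hj, hj2⟩ := agree (g i0) (i0 + 1)
    have hsub : g i0 ⊆ g j := fun x hx => (hj2 x hx).2 (h x hx)
    have hne : g i0 ≠ g j := fun e => by
      have := hginj e; omega
    exact hanti (hgF i0) (hgF j) hne hsub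
  have hmaxl : ∀ (l : List ℕ) (m : ℕ), m ∈ l → m ≤ l.foldr max 0 := by
    intro l
    induction l with
    | nil => simp
    | cons a t ih =>
      intro m hm
      rcases List.mem_cons.1 hm with h | h
      · subst h; exact le_max_left _ _
      · exact le_trans (ih m h) (le_max_right _ _)
  have hstep : ∀ l : List ℕ, ∃ i,
      (∀ m ∈ l, m < i) ∧ ∀ m ∈ l, ∀ x ∈ g m, (x ∈ g i ↔ P x) := by
    intro l
    obtain ⟨i, hi1, hi2⟩ := agree (l.toFinset.biUnion g) (l.foldr max 0 + 1)
    refine ⟨i, ?_, ?_⟩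
    · intro m hm
      have := hmaxl l m hm
      omega
    · intro m hm x hx
      exact hi2 x (Finset.mem_biUnion.2 ⟨m, List.mem_toFinset.2 hm, hx⟩)
  obtain ⟨idx, hidx⟩ := exists_seq _ hstep
  have hmono : ∀ {m n : ℕ}, m < n → idx m < idx n := by
    intro m n h
    exact (hidx n).1 (idx m) (List.mem_map_of_mem (f := idx) (List.mem_range.2 h))
  have hprop : ∀ {m n : ℕ}, m < n → ∀ x ∈ g (idx m), (x ∈ g (idx n) ↔ P x) := by
    intro m n h
    exact (hidx n).2 (idx m) (List.mem_map_of_mem (f := idx) (List.mem_range.2 h))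
  have hidxinj : Function.Injective idx := by
    intro a b hab
    by_contra hne
    rcases lt_or_gt_of_ne hne with h | h
    · have := hmono h; omega
    · have := hmono h; omega
  choose k hk1 hk2 using fun i => notsub (idx i)
  refine ⟨fun i => g (idx i), fun i => hgF _, hginj.comp hidxinj, k,
    fun i => ⟨hk1 i, fun j hj hmem => ?_⟩⟩
  rcases lt_or_gt_of_ne hj with h | h
  · exact hk2 i ((hprop h (k i) hmem).1 (hk1 i))
  · exact hk2 i ((hprop h (k i) (hk1 i)).1 hmem)
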